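/- Let μ be a probability measure on a product measurable space α × β with both factors standard Borel (or assume the relevant sigma-finiteness/measurability so that Mathlib's klDiv and marginals apply), and let μ₁ = μ.map Prod.fst and μ₂ = μ.map Prod.snd be its marginals. Then for all probability measures ν₁ on α and ν₂ on β: klDiv μ (μ₁.prod μ₂) ≤ klDiv μ (ν₁.prod ν₂). (The closest product measure to μ in Kullback–Leibler divergence is the product of its marginals.) -/

import Mathlib

open MeasureTheory
open scoped Classical

/-- The Kullback–Leibler divergence of two measures, defined as the integral of the
log-likelihood ratio when `μ ≪ ν` and the ratio is integrable, and `⊤` otherwise. -/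
noncomputable def klDiv {α : Type*} [MeasurableSpace α] (μ ν : Measure α) : EReal :=
  if μ ≪ ν ∧ Integrable (llr μ ν) μ then ((∫ x, llr μ ν x ∂μ : ℝ) : EReal) else ⊤

section AuxKLProd

open Real
open scoped ENNReal

lemma aux_integrable_max_neg_llr {α : Type*} [MeasurableSpace α] (μ ν : Measure α)
    [IsFiniteMeasure μ] [IsFiniteMeasure ν] (hμν : μ ≪ ν) :
    Integrable (fun x => max (-llr μ ν x) 0) μ := by
  refine (Measure.integrable_toReal_rnDeriv (μ := ν) (ν := μ)).mono
    (((measurable_llr μ ν).neg.max measurable_const).aestronglyMeasurable) ?_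
  filter_upwards [exp_neg_llr hμν] with x hx
  rw [Real.norm_eq_abs, Real.norm_eq_abs, abs_of_nonneg (le_max_right _ _),
    abs_of_nonneg ENNReal.toReal_nonneg, ← hx]
  have h1 := Real.add_one_le_exp (-llr μ ν x)
  have h2 := Real.exp_pos (-llr μ ν x)
  rcases le_total (-llr μ ν x) 0 with h | h
  · rw [max_eq_right h]; linarith
  · rw [max_eq_left h]; linarith

lemma aux_integral_llr_nonneg {α : Type*} [MeasurableSpace α] (μ ν : Measure α)
    [IsProbabilityMeasure μ] [IsProbabilityMeasure ν] (hμν : μ ≪ ν)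
    (h : Integrable (llr μ ν) μ) : 0 ≤ ∫ x, llr μ ν x ∂μ := by
  have h2 : Integrable (fun x => (ν.rnDeriv μ x).toReal) μ :=
    Measure.integrable_toReal_rnDeriv
  have hle : ∫ x, (1 - (ν.rnDeriv μ x).toReal) ∂μ ≤ ∫ x, llr μ ν x ∂μ := by
    refine integral_mono_ae ((integrable_const 1).sub h2) h ?_
    filter_upwards [exp_neg_llr hμν] with x hx
    have h3 := Real.add_one_le_exp (-llr μ ν x)
    rw [hx] at h3
    linarith
  have hint : ∫ x, (1 - (ν.rnDeriv μ x).toReal) ∂μ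
      = 1 - ∫ x, (ν.rnDeriv μ x).toReal ∂μ := by
    rw [integral_sub (integrable_const 1) h2, integral_const]; simp
  have hr : ∫ x, (ν.rnDeriv μ x).toReal ∂μ ≤ 1 := by
    rw [Measure.integral_toReal_rnDeriv']
    simp only [measureReal_def, measure_univ, ENNReal.toReal_one]
    have : 0 ≤ (ν.singularPart μ Set.univ).toReal := ENNReal.toReal_nonneg
    linarith
  linarith

variable {α β : Type*} [MeasurableSpace α] [MeasurableSpace β]

lemma aux_marginal_fst (μ : Measure (α × β)) [IsProbabilityMeasure μ]
    (ν₁ : Measure α) (ν₂ : Measure β)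
    [IsProbabilityMeasure ν₁] [IsProbabilityMeasure ν₂]
    (hac : μ ≪ ν₁.prod ν₂) :
    μ.map Prod.fst = ν₁.withDensity (fun x => ∫⁻ y, μ.rnDeriv (ν₁.prod ν₂) (x, y) ∂ν₂) := by
  set f := μ.rnDeriv (ν₁.prod ν₂) with hf
  have hfm : Measurable f := μ.measurable_rnDeriv _
  have hμ : μ = (ν₁.prod ν₂).withDensity f := (Measure.withDensity_rnDeriv_eq _ _ hac).symm
  ext s hs
  rw [Measure.map_apply measurable_fst hs, withDensity_apply _ hs]
  have hpre : Prod.fst ⁻¹' s = s ×ˢ (Set.univ : Set β) := by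
    ext p; simp
  conv_lhs => rw [hμ]
  rw [hpre, withDensity_apply _ (hs.prod MeasurableSet.univ), ← Measure.prod_restrict,
    Measure.restrict_univ, lintegral_prod _ hfm.aemeasurable]

lemma aux_marginal_snd (μ : Measure (α × β)) [IsProbabilityMeasure μ]
    (ν₁ : Measure α) (ν₂ : Measure β)
    [IsProbabilityMeasure ν₁] [IsProbabilityMeasure ν₂]
    (hac : μ ≪ ν₁.prod ν₂) :
    μ.map Prod.snd = ν₂.withDensity (fun y => ∫⁻ x, μ.rnDeriv (ν₁.prod ν₂) (x, y) ∂ν₁) := by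
  set f := μ.rnDeriv (ν₁.prod ν₂) with hf
  have hfm : Measurable f := μ.measurable_rnDeriv _
  have hμ : μ = (ν₁.prod ν₂).withDensity f := (Measure.withDensity_rnDeriv_eq _ _ hac).symm
  ext s hs
  rw [Measure.map_apply measurable_snd hs, withDensity_apply _ hs]
  have hpre : Prod.snd ⁻¹' s = (Set.univ : Set α) ×ˢ s := by
    ext p; simp
  conv_lhs => rw [hμ]
  rw [hpre, withDensity_apply _ (MeasurableSet.univ.prod hs), ← Measure.prod_restrict,
    Measure.restrict_univ, lintegral_prod_symm _ hfm.aemeasurable]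

lemma aux_prod_withDensity (ν₁ : Measure α) (ν₂ : Measure β) [SigmaFinite ν₁] [SigmaFinite ν₂]
    {f₁ : α → ℝ≥0∞} {f₂ : β → ℝ≥0∞} (hf₁ : Measurable f₁) (hf₂ : Measurable f₂)
    (h1 : SigmaFinite (ν₁.withDensity f₁)) (h2 : SigmaFinite (ν₂.withDensity f₂)) :
    (ν₁.withDensity f₁).prod (ν₂.withDensity f₂)
      = (ν₁.prod ν₂).withDensity (fun p => f₁ p.1 * f₂ p.2) := by
  haveI := h1; haveI := h2
  refine Measure.prod_eq fun s t hs ht => ?_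
  rw [withDensity_apply _ (hs.prod ht), ← Measure.prod_restrict,
    lintegral_prod_mul hf₁.aemeasurable hf₂.aemeasurable,
    withDensity_apply _ hs, withDensity_apply _ ht]

lemma aux_ac_prod_marginals (μ : Measure (α × β)) [IsProbabilityMeasure μ]
    (ν₁ : Measure α) (ν₂ : Measure β)
    [IsProbabilityMeasure ν₁] [IsProbabilityMeasure ν₂]
    (hac : μ ≪ ν₁.prod ν₂) :
    μ ≪ (μ.map Prod.fst).prod (μ.map Prod.snd) := by
  set f := μ.rnDeriv (ν₁.prod ν₂) with hfdef
  have hfm : Measurable f := μ.measurable_rnDeriv _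
  set f₁ : α → ℝ≥0∞ := fun x => ∫⁻ y, f (x, y) ∂ν₂ with hf₁def
  set f₂ : β → ℝ≥0∞ := fun y => ∫⁻ x, f (x, y) ∂ν₁ with hf₂def
  have hf₁m : Measurable f₁ := hfm.lintegral_prod_right'
  have hf₂m : Measurable f₂ := hfm.lintegral_prod_left'
  have hμ : μ = (ν₁.prod ν₂).withDensity f := (Measure.withDensity_rnDeriv_eq _ _ hac).symm
  have h1 : μ.map Prod.fst = ν₁.withDensity f₁ := aux_marginal_fst μ ν₁ ν₂ hac
  have h2 : μ.map Prod.snd = ν₂.withDensity f₂ := aux_marginal_snd μ ν₁ ν₂ hac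
  haveI i1 : IsProbabilityMeasure (μ.map Prod.fst) :=
    Measure.isProbabilityMeasure_map measurable_fst.aemeasurable
  haveI i2 : IsProbabilityMeasure (μ.map Prod.snd) :=
    Measure.isProbabilityMeasure_map measurable_snd.aemeasurable
  have hmπ : (μ.map Prod.fst).prod (μ.map Prod.snd)
      = (ν₁.prod ν₂).withDensity (fun p => f₁ p.1 * f₂ p.2) := by
    rw [h1, h2]
    exact aux_prod_withDensity ν₁ ν₂ hf₁m hf₂m (h1 ▸ inferInstance) (h2 ▸ inferInstance)
  -- key zero-set lemmas
  have K1 : ∀ᵐ p ∂(ν₁.prod ν₂), f₁ p.1 = 0 → f p = 0 := by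
    have hA : MeasurableSet {p : α × β | f₁ p.1 = 0} :=
      (hf₁m.comp measurable_fst) (measurableSet_singleton 0)
    have hset : {p : α × β | f₁ p.1 = 0} = {x | f₁ x = 0} ×ˢ (Set.univ : Set β) := by
      ext p; simp
    have hz : ∫⁻ p in {p : α × β | f₁ p.1 = 0}, f p ∂(ν₁.prod ν₂) = 0 := by
      rw [hset, ← Measure.restrict_prod_eq_prod_univ,
        lintegral_prod _ hfm.aemeasurable]
      have hA' : MeasurableSet {x | f₁ x = 0} := hf₁m (measurableSet_singleton 0)
      have : ∀ x ∈ {x | f₁ x = 0}, (∫⁻ y, f (x, y) ∂ν₂) = (fun _ => (0:ℝ≥0∞)) x :=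
        fun x hx => hx
      exact (setLIntegral_congr_fun hA' this).trans lintegral_zero
    rw [lintegral_eq_zero_iff hfm] at hz
    exact (ae_restrict_iff' hA).mp hz
  have K2 : ∀ᵐ p ∂(ν₁.prod ν₂), f₂ p.2 = 0 → f p = 0 := by
    have hA : MeasurableSet {p : α × β | f₂ p.2 = 0} :=
      (hf₂m.comp measurable_snd) (measurableSet_singleton 0)
    have hset : {p : α × β | f₂ p.2 = 0} = (Set.univ : Set α) ×ˢ {y | f₂ y = 0} := by
      ext p; simp
    have hz : ∫⁻ p in {p : α × β | f₂ p.2 = 0}, f p ∂(ν₁.prod ν₂) = 0 := by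
      rw [hset, ← Measure.prod_restrict, Measure.restrict_univ,
        lintegral_prod_symm _ hfm.aemeasurable]
      have hA' : MeasurableSet {y | f₂ y = 0} := hf₂m (measurableSet_singleton 0)
      have : ∀ y ∈ {y | f₂ y = 0}, (∫⁻ x, f (x, y) ∂ν₁) = (fun _ => (0:ℝ≥0∞)) y :=
        fun y hy => hy
      exact (setLIntegral_congr_fun hA' this).trans lintegral_zero
    rw [lintegral_eq_zero_iff hfm] at hz
    exact (ae_restrict_iff' hA).mp hz
  refine Measure.AbsolutelyContinuous.mk fun s hs h0 => ?_
  rw [hmπ, withDensity_apply _ hs, lintegral_eq_zero_iff (by fun_prop)] at h0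
  have h0' := (ae_restrict_iff' hs).mp h0
  rw [hμ, withDensity_apply _ hs, lintegral_eq_zero_iff hfm]
  rw [Filter.EventuallyEq, ae_restrict_iff' hs]
  filter_upwards [h0', K1, K2] with p hg h1' h2' 
  intro hps
  rcases mul_eq_zero.mp (hg hps) with h | h
  · exact h1' h
  · exact h2' h

lemma aux_llr_decomp (μ : Measure (α × β)) [IsProbabilityMeasure μ]
    (ν₁ : Measure α) (ν₂ : Measure β)
    [IsProbabilityMeasure ν₁] [IsProbabilityMeasure ν₂]
    (hac : μ ≪ ν₁.prod ν₂) (hac1 : μ.map Prod.fst ≪ ν₁) (hac2 : μ.map Prod.snd ≪ ν₂) :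
    llr μ (ν₁.prod ν₂) =ᵐ[μ]
      fun p => llr μ ((μ.map Prod.fst).prod (μ.map Prod.snd)) p
        + llr (μ.map Prod.fst) ν₁ p.1 + llr (μ.map Prod.snd) ν₂ p.2 := by
  set ν := ν₁.prod ν₂ with hνdef
  set μ₁ := μ.map Prod.fst with hμ₁def
  set μ₂ := μ.map Prod.snd with hμ₂def
  haveI i1 : IsProbabilityMeasure μ₁ := Measure.isProbabilityMeasure_map measurable_fst.aemeasurable
  haveI i2 : IsProbabilityMeasure μ₂ := Measure.isProbabilityMeasure_map measurable_snd.aemeasurable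
  set mπ := μ₁.prod μ₂ with hmπdef
  have hacmπ : μ ≪ mπ := aux_ac_prod_marginals μ ν₁ ν₂ hac
  set f := μ.rnDeriv ν with hfdef
  have hfm : Measurable f := μ.measurable_rnDeriv _
  set f₁ : α → ℝ≥0∞ := fun x => ∫⁻ y, f (x, y) ∂ν₂ with hf₁def
  set f₂ : β → ℝ≥0∞ := fun y => ∫⁻ x, f (x, y) ∂ν₁ with hf₂def
  have hf₁m : Measurable f₁ := hfm.lintegral_prod_right'
  have hf₂m : Measurable f₂ := hfm.lintegral_prod_left'
  have h1 : μ₁ = ν₁.withDensity f₁ := aux_marginal_fst μ ν₁ ν₂ hac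
  have h2 : μ₂ = ν₂.withDensity f₂ := aux_marginal_snd μ ν₁ ν₂ hac
  have hmπ : mπ = ν.withDensity (fun p => f₁ p.1 * f₂ p.2) := by
    rw [hmπdef, h1, h2]
    exact aux_prod_withDensity ν₁ ν₂ hf₁m hf₂m (h1 ▸ inferInstance)
      (h2 ▸ inferInstance)
  -- map of ν along fst/snd
  have hν₁ : ν.map Prod.fst = ν₁ := by simp [hνdef]
  have hν₂ : ν.map Prod.snd = ν₂ := by simp [hνdef]
  -- rnDeriv identities
  have hmπd : mπ.rnDeriv ν =ᵐ[ν] fun p => f₁ p.1 * f₂ p.2 := by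
    rw [hmπ]
    exact Measure.rnDeriv_withDensity ν (by fun_prop)
  have hr₁ : μ₁.rnDeriv ν₁ =ᵐ[ν₁] f₁ := by
    conv_lhs => rw [h1]
    exact Measure.rnDeriv_withDensity ν₁ hf₁m
  have hr₂ : μ₂.rnDeriv ν₂ =ᵐ[ν₂] f₂ := by
    conv_lhs => rw [h2]
    exact Measure.rnDeriv_withDensity ν₂ hf₂m
  -- pull a.e. ν₁ facts to a.e. ν
  have pull1 : ∀ {p : α → Prop}, MeasurableSet {x | p x} → (∀ᵐ x ∂ν₁, p x) →
      ∀ᵐ q ∂ν, p q.1 := by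
    intro p hp h
    rw [← hν₁] at h
    exact (ae_map_iff measurable_fst.aemeasurable hp).mp h
  have pull2 : ∀ {p : β → Prop}, MeasurableSet {y | p y} → (∀ᵐ y ∂ν₂, p y) →
      ∀ᵐ q ∂ν, p q.2 := by
    intro p hp h
    rw [← hν₂] at h
    exact (ae_map_iff measurable_snd.aemeasurable hp).mp h
  have pullμ1 : ∀ {p : α → Prop}, MeasurableSet {x | p x} → (∀ᵐ x ∂μ₁, p x) →
      ∀ᵐ q ∂μ, p q.1 := by
    intro p hp h
    exact (ae_map_iff measurable_fst.aemeasurable hp).mp h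
  have pullμ2 : ∀ {p : β → Prop}, MeasurableSet {y | p y} → (∀ᵐ y ∂μ₂, p y) →
      ∀ᵐ q ∂μ, p q.2 := by
    intro p hp h
    exact (ae_map_iff measurable_snd.aemeasurable hp).mp h
  -- chain rule a.e. ν then a.e. μ
  have chain : ∀ᵐ p ∂ν, μ.rnDeriv mπ p * mπ.rnDeriv ν p = f p :=
    Measure.rnDeriv_mul_rnDeriv hacmπ
  have hr₁ν : ∀ᵐ p ∂ν, μ₁.rnDeriv ν₁ p.1 = f₁ p.1 :=
    pull1 (measurableSet_eq_fun (μ₁.measurable_rnDeriv ν₁) hf₁m) hr₁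
  have hr₂ν : ∀ᵐ p ∂ν, μ₂.rnDeriv ν₂ p.2 = f₂ p.2 :=
    pull2 (measurableSet_eq_fun (μ₂.measurable_rnDeriv ν₂) hf₂m) hr₂
  have keyν : ∀ᵐ p ∂ν, f p = μ.rnDeriv mπ p * (μ₁.rnDeriv ν₁ p.1 * μ₂.rnDeriv ν₂ p.2) := by
    filter_upwards [chain, hmπd, hr₁ν, hr₂ν] with p hc hd h1' h2'
    rw [← hc, hd, h1', h2']
  have key : ∀ᵐ p ∂μ, f p = μ.rnDeriv mπ p * (μ₁.rnDeriv ν₁ p.1 * μ₂.rnDeriv ν₂ p.2) :=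
    hac.ae_le keyν
  -- positivity and finiteness a.e. μ
  have hqpos : ∀ᵐ p ∂μ, 0 < μ.rnDeriv mπ p := Measure.rnDeriv_pos hacmπ
  have hqlt : ∀ᵐ p ∂μ, μ.rnDeriv mπ p < ∞ := hacmπ.ae_le (μ.rnDeriv_lt_top mπ)
  have h1pos : ∀ᵐ p ∂μ, 0 < μ₁.rnDeriv ν₁ p.1 :=
    pullμ1 (measurableSet_lt measurable_const (μ₁.measurable_rnDeriv ν₁))
      (Measure.rnDeriv_pos hac1)
  have h1lt : ∀ᵐ p ∂μ, μ₁.rnDeriv ν₁ p.1 < ∞ :=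
    pullμ1 (measurableSet_lt (μ₁.measurable_rnDeriv ν₁) measurable_const)
      (hac1.ae_le (μ₁.rnDeriv_lt_top ν₁))
  have h2pos : ∀ᵐ p ∂μ, 0 < μ₂.rnDeriv ν₂ p.2 :=
    pullμ2 (measurableSet_lt measurable_const (μ₂.measurable_rnDeriv ν₂))
      (Measure.rnDeriv_pos hac2)
  have h2lt : ∀ᵐ p ∂μ, μ₂.rnDeriv ν₂ p.2 < ∞ :=
    pullμ2 (measurableSet_lt (μ₂.measurable_rnDeriv ν₂) measurable_const)
      (hac2.ae_le (μ₂.rnDeriv_lt_top ν₂))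
  filter_upwards [key, hqpos, hqlt, h1pos, h1lt, h2pos, h2lt]
    with p hk q0 qt a0 at' b0 bt
  have hq : ((μ.rnDeriv mπ p).toReal : ℝ) ≠ 0 :=
    ENNReal.toReal_ne_zero.mpr ⟨q0.ne', qt.ne⟩
  have ha : ((μ₁.rnDeriv ν₁ p.1).toReal : ℝ) ≠ 0 :=
    ENNReal.toReal_ne_zero.mpr ⟨a0.ne', at'.ne⟩
  have hb : ((μ₂.rnDeriv ν₂ p.2).toReal : ℝ) ≠ 0 :=
    ENNReal.toReal_ne_zero.mpr ⟨b0.ne', bt.ne⟩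
  show log (f p).toReal = log (μ.rnDeriv mπ p).toReal
      + log (μ₁.rnDeriv ν₁ p.1).toReal + log (μ₂.rnDeriv ν₂ p.2).toReal
  rw [hk, ENNReal.toReal_mul, ENNReal.toReal_mul,
    Real.log_mul hq (mul_ne_zero ha hb), Real.log_mul ha hb]
  ring

end AuxKLProd

/-- The closest product measure to `μ` in Kullback–Leibler divergence is the product of
its marginals. -/
theorem klDiv_prod_marginals_le {α β : Type*} [MeasurableSpace α] [MeasurableSpace β]
    [StandardBorelSpace α] [StandardBorelSpace β]
    (μ : Measure (α × β)) [IsProbabilityMeasure μ]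
    (ν₁ : Measure α) (ν₂ : Measure β)
    [IsProbabilityMeasure ν₁] [IsProbabilityMeasure ν₂] :
    klDiv μ ((μ.map Prod.fst).prod (μ.map Prod.snd)) ≤ klDiv μ (ν₁.prod ν₂) := by
  by_cases hc : μ ≪ ν₁.prod ν₂ ∧ Integrable (llr μ (ν₁.prod ν₂)) μ
  swap
  · have : klDiv μ (ν₁.prod ν₂) = ⊤ := by rw [klDiv, if_neg hc]
    rw [this]; exact le_top
  obtain ⟨hac, hint⟩ := hc
  set ν := ν₁.prod ν₂ with hνdef
  set μ₁ := μ.map Prod.fst with hμ₁def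
  set μ₂ := μ.map Prod.snd with hμ₂def
  haveI i1 : IsProbabilityMeasure μ₁ := Measure.isProbabilityMeasure_map measurable_fst.aemeasurable
  haveI i2 : IsProbabilityMeasure μ₂ := Measure.isProbabilityMeasure_map measurable_snd.aemeasurable
  set mπ := μ₁.prod μ₂ with hmπdef
  have hac1 : μ₁ ≪ ν₁ := by
    refine Measure.AbsolutelyContinuous.mk fun s hs h0 => ?_
    rw [hμ₁def, Measure.map_apply measurable_fst hs]
    refine hac ?_
    have hpre : Prod.fst ⁻¹' s = s ×ˢ (Set.univ : Set β) := by ext p; simp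
    rw [hpre, hνdef, Measure.prod_prod, h0, zero_mul]
  have hac2 : μ₂ ≪ ν₂ := by
    refine Measure.AbsolutelyContinuous.mk fun s hs h0 => ?_
    rw [hμ₂def, Measure.map_apply measurable_snd hs]
    refine hac ?_
    have hpre : Prod.snd ⁻¹' s = (Set.univ : Set α) ×ˢ s := by ext p; simp
    rw [hpre, hνdef, Measure.prod_prod, h0, mul_zero]
  have hacπ : μ ≪ mπ := aux_ac_prod_marginals μ ν₁ ν₂ hac
  have hdec : llr μ ν =ᵐ[μ]
      fun p => llr μ mπ p + llr μ₁ ν₁ p.1 + llr μ₂ ν₂ p.2 :=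
    aux_llr_decomp μ ν₁ ν₂ hac hac1 hac2
  -- negative parts
  have hbneg : Integrable (fun p => max (-llr μ mπ p) 0) μ :=
    aux_integrable_max_neg_llr μ mπ hacπ
  have hcneg : Integrable (fun p : α × β => max (-llr μ₁ ν₁ p.1) 0) μ :=
    (integrable_map_measure
      (((measurable_llr μ₁ ν₁).neg.max measurable_const).aestronglyMeasurable)
      measurable_fst.aemeasurable).mp (aux_integrable_max_neg_llr μ₁ ν₁ hac1)
  have hdneg : Integrable (fun p : α × β => max (-llr μ₂ ν₂ p.2) 0) μ :=
    (integrable_map_measure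
      (((measurable_llr μ₂ ν₂).neg.max measurable_const).aestronglyMeasurable)
      measurable_snd.aemeasurable).mp (aux_integrable_max_neg_llr μ₂ ν₂ hac2)
  -- integrability of each term
  have hbound : Integrable (fun p => |llr μ ν p| + max (-llr μ mπ p) 0
      + max (-llr μ₁ ν₁ p.1) 0 + max (-llr μ₂ ν₂ p.2) 0) μ :=
    ((hint.abs.add hbneg).add hcneg).add hdneg
  have hb : Integrable (llr μ mπ) μ := by
    refine hbound.mono (measurable_llr μ mπ).aestronglyMeasurable ?_
    filter_upwards [hdec] with p hp
    have h1 : -llr μ mπ p ≤ max (-llr μ mπ p) 0 := le_max_left _ _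
    have h2 : -llr μ₁ ν₁ p.1 ≤ max (-llr μ₁ ν₁ p.1) 0 := le_max_left _ _
    have h3 : -llr μ₂ ν₂ p.2 ≤ max (-llr μ₂ ν₂ p.2) 0 := le_max_left _ _
    have h4 : llr μ ν p ≤ |llr μ ν p| := le_abs_self _
    have h5 : (0:ℝ) ≤ max (-llr μ mπ p) 0 := le_max_right _ _
    have h6 : (0:ℝ) ≤ max (-llr μ₁ ν₁ p.1) 0 := le_max_right _ _
    have h7 : (0:ℝ) ≤ max (-llr μ₂ ν₂ p.2) 0 := le_max_right _ _
    have h8 : (0:ℝ) ≤ |llr μ ν p| := abs_nonneg _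
    have hg0 : (0:ℝ) ≤ |llr μ ν p| + max (-llr μ mπ p) 0
        + max (-llr μ₁ ν₁ p.1) 0 + max (-llr μ₂ ν₂ p.2) 0 :=
      add_nonneg (add_nonneg (add_nonneg (abs_nonneg _) h5) h6) h7
    rw [Real.norm_eq_abs, Real.norm_eq_abs, abs_of_nonneg hg0, abs_le]
    constructor <;> linarith
  have hcint : Integrable (fun p : α × β => llr μ₁ ν₁ p.1) μ := by
    refine hbound.mono ((measurable_llr μ₁ ν₁).comp measurable_fst).aestronglyMeasurable ?_
    filter_upwards [hdec] with p hp
    have h1 : -llr μ mπ p ≤ max (-llr μ mπ p) 0 := le_max_left _ _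
    have h2 : -llr μ₁ ν₁ p.1 ≤ max (-llr μ₁ ν₁ p.1) 0 := le_max_left _ _
    have h3 : -llr μ₂ ν₂ p.2 ≤ max (-llr μ₂ ν₂ p.2) 0 := le_max_left _ _
    have h4 : llr μ ν p ≤ |llr μ ν p| := le_abs_self _
    have h5 : (0:ℝ) ≤ max (-llr μ mπ p) 0 := le_max_right _ _
    have h6 : (0:ℝ) ≤ max (-llr μ₁ ν₁ p.1) 0 := le_max_right _ _
    have h7 : (0:ℝ) ≤ max (-llr μ₂ ν₂ p.2) 0 := le_max_right _ _
    have h8 : (0:ℝ) ≤ |llr μ ν p| := abs_nonneg _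
    have hg0 : (0:ℝ) ≤ |llr μ ν p| + max (-llr μ mπ p) 0
        + max (-llr μ₁ ν₁ p.1) 0 + max (-llr μ₂ ν₂ p.2) 0 :=
      add_nonneg (add_nonneg (add_nonneg (abs_nonneg _) h5) h6) h7
    rw [Real.norm_eq_abs, Real.norm_eq_abs, abs_of_nonneg hg0, abs_le]
    constructor <;> linarith
  have hdint : Integrable (fun p : α × β => llr μ₂ ν₂ p.2) μ := by
    have : (fun p : α × β => llr μ₂ ν₂ p.2) =ᵐ[μ]
        fun p => llr μ ν p - llr μ mπ p - llr μ₁ ν₁ p.1 := by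
      filter_upwards [hdec] with p hp
      rw [hp]; ring
    exact ((hint.sub hb).sub hcint).congr this.symm
  -- integral identity
  have hsum : ∫ p, llr μ ν p ∂μ = ∫ p, llr μ mπ p ∂μ
      + ∫ p, llr μ₁ ν₁ p.1 ∂μ + ∫ p, llr μ₂ ν₂ p.2 ∂μ := by
    have hbc : Integrable (fun p : α × β => llr μ mπ p + llr μ₁ ν₁ p.1) μ := hb.add hcint
    rw [integral_congr_ae hdec, integral_add hbc hdint, integral_add hb hcint]
  -- nonnegativity of the marginal terms
  have hic : Integrable (llr μ₁ ν₁) μ₁ :=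
    (integrable_map_measure (stronglyMeasurable_llr _ _).aestronglyMeasurable
      measurable_fst.aemeasurable).mpr hcint
  have hid : Integrable (llr μ₂ ν₂) μ₂ :=
    (integrable_map_measure (stronglyMeasurable_llr _ _).aestronglyMeasurable
      measurable_snd.aemeasurable).mpr hdint
  have hmap1 : ∫ p, llr μ₁ ν₁ p.1 ∂μ = ∫ x, llr μ₁ ν₁ x ∂μ₁ := by
    rw [hμ₁def]
    exact (integral_map measurable_fst.aemeasurable
      (stronglyMeasurable_llr _ _).aestronglyMeasurable).symm
  have hmap2 : ∫ p, llr μ₂ ν₂ p.2 ∂μ = ∫ x, llr μ₂ ν₂ x ∂μ₂ := by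
    rw [hμ₂def]
    exact (integral_map measurable_snd.aemeasurable
      (stronglyMeasurable_llr _ _).aestronglyMeasurable).symm
  have hc0 : 0 ≤ ∫ p, llr μ₁ ν₁ p.1 ∂μ := by
    rw [hmap1]; exact aux_integral_llr_nonneg μ₁ ν₁ hac1 hic
  have hd0 : 0 ≤ ∫ p, llr μ₂ ν₂ p.2 ∂μ := by
    rw [hmap2]; exact aux_integral_llr_nonneg μ₂ ν₂ hac2 hid
  rw [klDiv, klDiv, if_pos ⟨hacπ, hb⟩, if_pos ⟨hac, hint⟩]
  rw [EReal.coe_le_coe_iff]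
  linarith [hsum, hc0, hd0]
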